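/- Let λ > 0, θ = arctan λ, φ = arctan(λ/2). Then for every real ψ: 1 − (2/(1+λ²))·cos(ψ − 2θ) + (6/√((1+λ²)(4+λ²)))·cos(ψ − θ + φ) = 1 + A_λ·cos(ψ − θ_λ), where A_λ = (2/(λ²+1))·√((16λ²+1)/(λ²+4)) and θ_λ = arctan( λ(λ²−5) / (2(2λ⁴+6λ²+1)) ). -/
import Mathlib
open Real

theorem amplitude_phase_identity (lam : ℝ) (hlam : 0 < lam) (ψ : ℝ) :
    1 - (2 / (1 + lam ^ 2)) * Real.cos (ψ - 2 * Real.arctan lam)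
      + (6 / Real.sqrt ((1 + lam ^ 2) * (4 + lam ^ 2))) *
          Real.cos (ψ - Real.arctan lam + Real.arctan (lam / 2))
    = 1 + (2 / (lam ^ 2 + 1)) * Real.sqrt ((16 * lam ^ 2 + 1) / (lam ^ 2 + 4)) *
        Real.cos (ψ - Real.arctan (lam * (lam ^ 2 - 5) /
          (2 * (2 * lam ^ 4 + 6 * lam ^ 2 + 1)))) := by
  have h1 : (0:ℝ) < 1 + lam ^ 2 := by positivity
  have h4 : (0:ℝ) < lam ^ 2 + 4 := by positivity
  have hM : (0:ℝ) < 2 * lam ^ 4 + 6 * lam ^ 2 + 1 := by positivity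
  have h16 : (0:ℝ) < 16 * lam ^ 2 + 1 := by positivity
  set a := Real.sqrt (1 + lam ^ 2) with ha
  set b := Real.sqrt (lam ^ 2 + 4) with hb
  set r := Real.sqrt (16 * lam ^ 2 + 1) with hr
  have hapos : 0 < a := Real.sqrt_pos.mpr h1
  have hbpos : 0 < b := Real.sqrt_pos.mpr h4
  have hrpos : 0 < r := Real.sqrt_pos.mpr h16
  have ha2 : a ^ 2 = 1 + lam ^ 2 := Real.sq_sqrt h1.le
  have hb2 : b ^ 2 = lam ^ 2 + 4 := Real.sq_sqrt h4.le
  have hr2 : r ^ 2 = 16 * lam ^ 2 + 1 := Real.sq_sqrt h16.le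
  have ha4 : a ^ 4 = (1 + lam ^ 2) ^ 2 := by
    rw [show a ^ 4 = (a ^ 2) ^ 2 by ring, ha2]
  have hb4 : b ^ 4 = (lam ^ 2 + 4) ^ 2 := by
    rw [show b ^ 4 = (b ^ 2) ^ 2 by ring, hb2]
  have hr4 : r ^ 4 = (16 * lam ^ 2 + 1) ^ 2 := by
    rw [show r ^ 4 = (r ^ 2) ^ 2 by ring, hr2]
  -- sqrt of product
  have hab : Real.sqrt ((1 + lam ^ 2) * (4 + lam ^ 2)) = a * b := by
    rw [show (4 + lam ^ 2) = lam ^ 2 + 4 by ring, Real.sqrt_mul h1.le]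
  -- sqrt(1 + (lam/2)^2) = b/2
  have hhalf : Real.sqrt (1 + (lam / 2) ^ 2) = b / 2 := by
    rw [show 1 + (lam / 2) ^ 2 = (b / 2) ^ 2 by rw [div_pow, div_pow, hb2]; ring]
    exact Real.sqrt_sq (by positivity)
  -- sqrt((16λ²+1)/(λ²+4)) = r / b
  have hrb : Real.sqrt ((16 * lam ^ 2 + 1) / (lam ^ 2 + 4)) = r / b :=
    Real.sqrt_div h16.le _
  -- sqrt(1 + t²)
  set t := lam * (lam ^ 2 - 5) / (2 * (2 * lam ^ 4 + 6 * lam ^ 2 + 1)) with ht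
  have hst : Real.sqrt (1 + t ^ 2)
      = r * b * (1 + lam ^ 2) / (2 * (2 * lam ^ 4 + 6 * lam ^ 2 + 1)) := by
    rw [show 1 + t ^ 2 = (r * b * (1 + lam ^ 2) / (2 * (2 * lam ^ 4 + 6 * lam ^ 2 + 1))) ^ 2 by
      rw [ht, div_pow, div_pow, mul_pow, mul_pow, mul_pow, mul_pow, hr2, hb2]; field_simp; ring]
    exact Real.sqrt_sq (by positivity)
  -- term lemmas
  have hTerm1 : (2 / (1 + lam ^ 2)) * Real.cos (ψ - 2 * Real.arctan lam)
      = (2 * (1 - lam ^ 2) * Real.cos ψ + 4 * lam * Real.sin ψ) / (1 + lam ^ 2) ^ 2 := by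
    rw [Real.cos_sub, Real.cos_two_mul, Real.sin_two_mul, Real.cos_arctan, Real.sin_arctan, ← ha]
    field_simp
    ring_nf
    simp only [ha4, ha2]
    ring
  have hTerm2 : (6 / Real.sqrt ((1 + lam ^ 2) * (4 + lam ^ 2))) *
        Real.cos (ψ - (Real.arctan lam - Real.arctan (lam / 2)))
      = (6 * (2 + lam ^ 2) * Real.cos ψ + 6 * lam * Real.sin ψ)
          / ((1 + lam ^ 2) * (lam ^ 2 + 4)) := by
    rw [Real.cos_sub, Real.cos_sub, Real.sin_sub, Real.cos_arctan, Real.sin_arctan,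
      Real.cos_arctan, Real.sin_arctan, hab, hhalf, ← ha]
    field_simp
    ring_nf
    simp only [ha4, hb4, ha2, hb2]
    ring
  have hTerm3 : (2 / (lam ^ 2 + 1)) * Real.sqrt ((16 * lam ^ 2 + 1) / (lam ^ 2 + 4)) *
        Real.cos (ψ - Real.arctan t)
      = ((4 * (2 * lam ^ 4 + 6 * lam ^ 2 + 1)) * Real.cos ψ
          + (2 * lam * (lam ^ 2 - 5)) * Real.sin ψ)
          / ((1 + lam ^ 2) ^ 2 * (lam ^ 2 + 4)) := by
    rw [Real.cos_sub, Real.cos_arctan, Real.sin_arctan, hst, hrb, ht]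
    field_simp
    ring_nf
    simp only [ha4, hb4, hr4, ha2, hb2, hr2]
    ring
  rw [show ψ - Real.arctan lam + Real.arctan (lam / 2)
      = ψ - (Real.arctan lam - Real.arctan (lam / 2)) by ring]
  rw [hTerm1, hTerm2, hTerm3]
  field_simp
  ring
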